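/- For d ≥ 2 and ε_crit = d/(2(d + √d)), we have √(A_{ε_crit}) = (√d + 1)·√(ε_crit), where A_ε = d − ε(d−1). Consequently, for the state ρ = (1−ε_crit)|φ⟩⟨φ| + (ε_crit/d)I with φ = (1/√d)∑_x m_x, one has √(dρ)·m_x = √(d M_x)·φ for every x, where M_x = (1−ε_crit)|m_x⟩⟨m_x| + (ε_crit/d)I. -/

import Mathlib

open Matrix BigOperators
open scoped ComplexOrder

lemma proj_mulVec {d : ℕ} (v x : Fin d → ℂ) :
    vecMulVec v (star v) *ᵥ x = (star v ⬝ᵥ x) • v := by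
  ext i
  simp [mulVec, vecMulVec_apply, dotProduct, Finset.sum_mul, Pi.smul_apply, smul_eq_mul]
  exact Finset.sum_congr rfl fun k _ => by ring

lemma proj_posSemidef {d : ℕ} (v : Fin d → ℂ) :
    (vecMulVec v (star v)).PosSemidef := by
  refine Matrix.PosSemidef.of_dotProduct_mulVec_nonneg ?_ ?_
  · ext i j
    simp only [conjTranspose_apply, vecMulVec_apply, Pi.star_apply, star_mul', star_star]
    ring
  · intro x
    rw [proj_mulVec]
    have h2 : star x ⬝ᵥ v = star (star v ⬝ᵥ x) := by
      simp only [dotProduct, star_sum, star_mul', star_star, Pi.star_apply]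
      exact Finset.sum_congr rfl fun k _ => mul_comm _ _
    have : star x ⬝ᵥ ((star v ⬝ᵥ x) • v) = (star v ⬝ᵥ x) * star (star v ⬝ᵥ x) := by
      rw [dotProduct_smul, smul_eq_mul, h2]
    rw [this]
    exact mul_star_self_nonneg _

lemma smul_posSemidef {d : ℕ} {M : Matrix (Fin d) (Fin d) ℂ} (hM : M.PosSemidef)
    {c : ℝ} (hc : 0 ≤ c) : ((c:ℂ) • M).PosSemidef := by
  refine Matrix.PosSemidef.of_dotProduct_mulVec_nonneg ?_ ?_
  · ext i j
    simp only [conjTranspose_apply, Matrix.smul_apply, smul_eq_mul, RCLike.star_def]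
    rw [_root_.map_mul, Complex.conj_ofReal, ← RCLike.star_def, hM.1.apply]
  · intro x
    rw [smul_mulVec, dotProduct_smul, smul_eq_mul]
    exact mul_nonneg (by exact_mod_cast Complex.zero_le_real.mpr hc) (hM.dotProduct_mulVec_nonneg x)

lemma proj_mul_proj {d : ℕ} (v : Fin d → ℂ) (hv : star v ⬝ᵥ v = 1) :
    vecMulVec v (star v) * vecMulVec v (star v) = vecMulVec v (star v) := by
  ext i j
  simp only [Matrix.mul_apply, vecMulVec_apply, Pi.star_apply]
  have : ∀ k, v i * star (v k) * (v k * star (v j))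
      = (v i * star (v j)) * (star (v k) * v k) := fun k => by ring
  simp_rw [this, ← Finset.mul_sum]
  have := hv
  simp only [dotProduct, Pi.star_apply] at this
  rw [this, mul_one]


lemma dotProduct_sum' {d : ℕ} (v : Fin d → ℂ) (w : Fin d → Fin d → ℂ) :
    v ⬝ᵥ (∑ x, w x) = ∑ x, v ⬝ᵥ w x := by
  simp only [dotProduct, Finset.sum_apply, Finset.mul_sum]
  rw [Finset.sum_comm]

lemma sum_dotProduct' {d : ℕ} (w : Fin d → Fin d → ℂ) (v : Fin d → ℂ) :
    (∑ x, w x) ⬝ᵥ v = ∑ x, w x ⬝ᵥ v := by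
  simp only [dotProduct, Finset.sum_apply, Finset.sum_mul]
  rw [Finset.sum_comm]

/-- at the critical noise `ε_crit = d/(2(d+√d))` one has
`√A_{ε_crit} = (√d+1)√ε_crit`, and the state and measurement square-root vectors align:
`√(dρ)·m_x = √(dM_x)·φ` for every `x`. -/
theorem critical_noise_alignment
    (d : ℕ) (hd : 2 ≤ d)
    (m : Fin d → (Fin d → ℂ))
    (hm : ∀ i j, star (m i) ⬝ᵥ m j = if i = j then 1 else 0)
    (φ : Fin d → ℂ) (hφ : φ = (Real.sqrt d)⁻¹ • ∑ x, m x)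
    (εc : ℝ) (hεc : εc = (d : ℝ) / (2 * ((d : ℝ) + Real.sqrt d)))
    (A : ℝ) (hA : A = (d : ℝ) - εc * ((d : ℝ) - 1))
    (ρ : Matrix (Fin d) (Fin d) ℂ)
    (hρ : ρ = ((1 - εc : ℝ)) • vecMulVec φ (star φ) +
        ((εc / d : ℝ)) • (1 : Matrix (Fin d) (Fin d) ℂ))
    (M : Fin d → Matrix (Fin d) (Fin d) ℂ)
    (hM : ∀ x, M x = ((1 - εc : ℝ)) • vecMulVec (m x) (star (m x)) +
        ((εc / d : ℝ)) • (1 : Matrix (Fin d) (Fin d) ℂ))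
    (Rρ : Matrix (Fin d) (Fin d) ℂ) (hRρ : Rρ.PosSemidef) (hRρsq : Rρ * Rρ = ρ)
    (RM : Fin d → Matrix (Fin d) (Fin d) ℂ)
    (hRM : ∀ x, (RM x).PosSemidef) (hRMsq : ∀ x, RM x * RM x = M x) :
    Real.sqrt A = (Real.sqrt d + 1) * Real.sqrt εc ∧
    ∀ x, Real.sqrt d • (Rρ *ᵥ m x) = Real.sqrt d • ((RM x) *ᵥ φ) := by
  have hdpos : (0:ℝ) < d := by positivity
  set s := Real.sqrt d with hsdef
  have hs : s ^ 2 = d := Real.sq_sqrt hdpos.le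
  have hspos : 0 < s := Real.sqrt_pos.mpr hdpos
  have hεpos : 0 < εc := by rw [hεc]; positivity
  have hεle : εc ≤ 1 := by
    rw [hεc, div_le_one (by positivity)]
    nlinarith [hspos.le]
  -- Part 1
  have hAeq : A = (s + 1) ^ 2 * εc := by
    rw [hA, hεc]
    rw [← hs]
    field_simp
    ring
  have part1 : Real.sqrt A = (s + 1) * Real.sqrt εc := by
    rw [hAeq, Real.sqrt_mul (sq_nonneg _), Real.sqrt_sq (by positivity)]
  refine ⟨part1, ?_⟩
  -- Part 2
  set b := Real.sqrt (εc / d) with hbdef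
  have hb0 : 0 ≤ b := Real.sqrt_nonneg _
  have hb2 : b ^ 2 = εc / d := Real.sq_sqrt (by positivity)
  -- scalar identities
  have hr2 : b * b = εc / d := by rw [← pow_two]; exact hb2
  have hεd : εc * (2 * ((d:ℝ) + s)) = d := by
    rw [hεc]; field_simp
  have hr1 : s * b * (s * b) + (s * b * b + b * (s * b)) = 1 - εc := by
    have h1 : s * b * (s * b) + (s * b * b + b * (s * b)) = (s ^ 2 + 2 * s) * (b * b) := by
      ring
    rw [h1, hr2, hs]
    field_simp
    linear_combination hεd
  have hsC : (s : ℂ) ≠ 0 := by exact_mod_cast hspos.ne'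
  -- complex form of φ
  have hφC : φ = ((s : ℂ))⁻¹ • ∑ x, m x := by
    rw [hφ]
    funext i
    simp only [Pi.smul_apply, Complex.real_smul, Complex.ofReal_inv, smul_eq_mul]
  have hmm : ∀ x, star (m x) ⬝ᵥ m x = 1 := fun x => by simpa using hm x x
  have hφm : ∀ x, star φ ⬝ᵥ m x = (s : ℂ)⁻¹ := by
    intro x
    rw [hφC, star_smul, smul_dotProduct, star_sum, sum_dotProduct']
    simp [hm, Finset.sum_ite_eq', star_inv₀, RCLike.star_def, Complex.conj_ofReal]
  have hmφ : ∀ x, star (m x) ⬝ᵥ φ = (s : ℂ)⁻¹ := by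
    intro x
    rw [hφC, dotProduct_smul, dotProduct_sum']
    simp [hm, Finset.sum_ite_eq]
  have hφunit : star φ ⬝ᵥ φ = 1 := by
    nth_rewrite 2 [hφC]
    rw [dotProduct_smul, dotProduct_sum']
    simp only [hφm, Finset.sum_const, Finset.card_univ, Fintype.card_fin, nsmul_eq_mul,
      smul_eq_mul]
    have hd2 : (s : ℂ) * s = (d : ℕ) := by
      have : ((s * s : ℝ) : ℂ) = ((d : ℝ) : ℂ) := by
        norm_cast
        nlinarith [hs]
      simpa using this
    field_simp
    rw [← hd2]
    ring
  -- the explicit square roots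
  have smul_real : ∀ (c : ℝ) (N : Matrix (Fin d) (Fin d) ℂ), c • N = ((c : ℝ) : ℂ) • N := by
    intro c N
    ext i j
    simp [Matrix.smul_apply, Complex.real_smul]
  have key : ∀ (v : Fin d → ℂ), star v ⬝ᵥ v = 1 →
      ∀ (R : Matrix (Fin d) (Fin d) ℂ), R.PosSemidef →
      R * R = ((1 - εc : ℝ)) • vecMulVec v (star v) + ((εc / d : ℝ)) • 1 →
      R = ((s * b : ℝ) : ℂ) • vecMulVec v (star v) + ((b : ℝ) : ℂ) • 1 := by
    intro v hv R hR hRsq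
    set P := vecMulVec v (star v) with hPdef
    set S := ((s * b : ℝ) : ℂ) • P + ((b : ℝ) : ℂ) • (1 : Matrix (Fin d) (Fin d) ℂ) with hSdef
    have hSpos : S.PosSemidef :=
      (smul_posSemidef (proj_posSemidef v) (by positivity)).add
        (smul_posSemidef Matrix.PosSemidef.one hb0)
    have hP2 : P * P = P := proj_mul_proj v hv
    have e1 : ((1 - εc : ℝ) : ℂ)
        = ((s * b : ℝ) : ℂ) * ((s * b : ℝ) : ℂ)
          + (((s * b : ℝ) : ℂ) * ((b : ℝ) : ℂ) + ((b : ℝ) : ℂ) * ((s * b : ℝ) : ℂ)) := by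
      exact_mod_cast hr1.symm
    have e2 : ((εc / d : ℝ) : ℂ) = ((b : ℝ) : ℂ) * ((b : ℝ) : ℂ) := by
      exact_mod_cast hr2.symm
    have hSsq : S * S = R * R := by
      rw [hRsq, smul_real (1 - εc), smul_real (εc / d), hSdef]
      rw [add_mul, mul_add, mul_add, smul_mul_smul_comm, smul_mul_smul_comm,
        smul_mul_smul_comm, smul_mul_smul_comm, hP2, Matrix.mul_one, Matrix.one_mul,
        Matrix.mul_one, e1, e2]
      module
    exact (open scoped MatrixOrder in (CFC.sq_eq_sq_iff R S hR.nonneg hSpos.nonneg).mp (by rw [sq, sq, hSsq]))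
  have hRρeq := key φ hφunit Rρ hRρ (by rw [hRρsq, hρ])
  have hRMeq : ∀ x, RM x = ((s * b : ℝ) : ℂ) • vecMulVec (m x) (star (m x)) + ((b : ℝ) : ℂ) • 1 :=
    fun x => key (m x) (hmm x) (RM x) (hRM x) (by rw [hRMsq x, hM x])
  intro x
  have hcoef : ((s * b : ℝ) : ℂ) * (s : ℂ)⁻¹ = ((b : ℝ) : ℂ) := by
    push_cast
    field_simp
  have hL : Rρ *ᵥ m x = ((b : ℝ) : ℂ) • φ + ((b : ℝ) : ℂ) • m x := by
    rw [hRρeq, add_mulVec, smul_mulVec, smul_mulVec, one_mulVec, proj_mulVec,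
      hφm x, smul_smul, hcoef]
  have hR : RM x *ᵥ φ = ((b : ℝ) : ℂ) • m x + ((b : ℝ) : ℂ) • φ := by
    rw [hRMeq x, add_mulVec, smul_mulVec, smul_mulVec, one_mulVec, proj_mulVec,
      hmφ x, smul_smul, hcoef]
  rw [hL, hR, add_comm]
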